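/- Let a ∈ 𝒜, ξ ∈ ℝ with |ξ| ≥ 1, and let f : 𝕋 → ℂ be bounded measurable. If u is a periodic W^{2,1} function with −u'' + iξ a u = a f a.e., then ‖u‖_{H¹_a} ≤ √2 |ξ|^{−1/2} [f]_a; consequently there is a constant C, independent of a, ξ and f, such that ‖u‖_{H¹} ≤ C |ξ|^{−1/2} [f]_a. -/

import Mathlib

open MeasureTheory Set Complex
open ComplexConjugate

noncomputable section

/-- `a ∈ 𝒜`: a measurable 1-periodic function (a function on the torus `𝕋`),
nonnegative a.e., integrable over one period, with `∫ a = 1`. -/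
def MemA (a : ℝ → ℝ) : Prop :=
  Measurable a ∧ (∀ x, a (x + 1) = a x) ∧ (∀ᵐ x : ℝ, 0 ≤ a x) ∧
    IntegrableOn a (Ioc 0 1) ∧ (∫ x in Ioc (0:ℝ) 1, a x) = 1

/-- A periodic `W^{2,1}` function: a 1-periodic continuously differentiable
`u : ℝ → ℂ` whose derivative is absolutely continuous with (periodic) second
derivative `u'' ∈ L¹(𝕋)`. -/
def IsPeriodicW21 (u u'' : ℝ → ℂ) : Prop :=
  (∀ x, u (x + 1) = u x) ∧ (∀ x, u'' (x + 1) = u'' x) ∧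
  ContDiff ℝ 1 u ∧
  (∀ x, deriv u x = deriv u 0 + ∫ t in (0:ℝ)..x, u'' t) ∧
  IntegrableOn u'' (Ioc 0 1)

/-- The seminorm `[f]_a = (∫ a |f|²)^{1/2}`. -/
def seminormA (a : ℝ → ℝ) (f : ℝ → ℂ) : ℝ :=
  Real.sqrt (∫ x in Ioc (0:ℝ) 1, a x * ‖f x‖ ^ 2)

lemma cs_integral {μ : Measure ℝ} {g h : ℝ → ℝ}
    (hg0 : 0 ≤ᵐ[μ] g) (hh0 : 0 ≤ᵐ[μ] h)
    (hgm : AEStronglyMeasurable g μ) (hhm : AEStronglyMeasurable h μ)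
    (hg2 : Integrable (fun x => g x ^ 2) μ) (hh2 : Integrable (fun x => h x ^ 2) μ) :
    ∫ x, g x * h x ∂μ ≤ Real.sqrt (∫ x, g x ^ 2 ∂μ) * Real.sqrt (∫ x, h x ^ 2 ∂μ) := by
  have hpq : Real.HolderConjugate 2 2 := Real.HolderConjugate.two_two
  have h2 : (ENNReal.ofReal (2:ℝ)) = 2 := by simp [ENNReal.ofReal_ofNat]
  have hgL : MemLp g (ENNReal.ofReal (2:ℝ)) μ := by
    rw [h2]; exact (memLp_two_iff_integrable_sq hgm).2 hg2
  have hhL : MemLp h (ENNReal.ofReal (2:ℝ)) μ := by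
    rw [h2]; exact (memLp_two_iff_integrable_sq hhm).2 hh2
  have := integral_mul_le_Lp_mul_Lq_of_nonneg hpq hg0 hh0 hgL hhL
  calc ∫ x, g x * h x ∂μ
      ≤ (∫ x, g x ^ (2:ℝ) ∂μ) ^ ((1:ℝ)/2) * (∫ x, h x ^ (2:ℝ) ∂μ) ^ ((1:ℝ)/2) := this
    _ = Real.sqrt (∫ x, g x ^ 2 ∂μ) * Real.sqrt (∫ x, h x ^ 2 ∂μ) := by
        rw [Real.sqrt_eq_rpow, Real.sqrt_eq_rpow]
        norm_num [Real.rpow_two]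

set_option maxHeartbeats 1000000 in
lemma key (a : ℝ → ℝ) (ha : MemA a) (ξ : ℝ) (hξ : 1 ≤ |ξ|)
    (f : ℝ → ℂ) (hfm : Measurable f) (hfb : ∃ M, ∀ x, ‖f x‖ ≤ M)
    (u u'' : ℝ → ℂ) (hu : IsPeriodicW21 u u'')
    (hode : ∀ᵐ x : ℝ,
      -u'' x + (ξ : ℂ) * Complex.I * (a x : ℂ) * u x = (a x : ℂ) * f x) :
    ((∫ x in Ioc (0:ℝ) 1, a x * ‖u x‖ ^ 2) + (∫ x in Ioc (0:ℝ) 1, ‖deriv u x‖ ^ 2)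
        ≤ 2 * |ξ|⁻¹ * (seminormA a f) ^ 2) ∧
    ((∫ x in Ioc (0:ℝ) 1, ‖u x‖ ^ 2)
        ≤ 2 * ((∫ x in Ioc (0:ℝ) 1, a x * ‖u x‖ ^ 2) + (∫ x in Ioc (0:ℝ) 1, ‖deriv u x‖ ^ 2))) := by
  obtain ⟨ham, haper, ha0, haint, ha1⟩ := ha
  obtain ⟨huper, hu''per, hreg, hderiv_eq, hu''int⟩ := hu
  obtain ⟨M, hM⟩ := hfb
  have hM0 : 0 ≤ M := le_trans (norm_nonneg _) (hM 0)
  set μ : Measure ℝ := volume.restrict (Ioc (0:ℝ) 1) with hμ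
  set v : ℝ → ℂ := deriv u with hv
  have hucont : Continuous u := hreg.continuous
  have hudiff : Differentiable ℝ u := hreg.differentiable one_ne_zero
  have hvcont : Continuous v := hreg.continuous_deriv le_rfl
  have hu10 : u 1 = u 0 := by simpa using huper 0
  -- v is periodic at 0/1
  have hv10 : v 1 = v 0 := by
    have hcomp : (fun y => u (y + 1)) = u := funext huper
    have : deriv (fun y => u (y + 1)) 0 = deriv u (0 + 1) := deriv_comp_add_const u 1 0
    rw [hcomp] at this
    simpa [hv] using this.symm
  have hμfin : μ (univ) < ⊤ := by
    rw [hμ]; simp [Measure.restrict_apply, Real.volume_Ioc]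
  -- basic integral facts
  have hiu'' : (∫ x, u'' x ∂μ) = 0 := by
    have h1 := hderiv_eq 1
    rw [hv10, intervalIntegral.integral_of_le zero_le_one] at h1
    have := left_eq_add.mp h1
    simpa [hμ] using this
  have hvintOn : IntegrableOn v (Ioc (0:ℝ) 1) := hvcont.integrableOn_Ioc
  have hiv : (∫ x, v x ∂μ) = 0 := by
    have := intervalIntegral.integral_deriv_eq_sub (fun x _ => hudiff x)
      (hvcont.intervalIntegrable 0 1)
    rw [intervalIntegral.integral_of_le zero_le_one, hu10] at this
    simpa [hμ, hv] using this
  -- boundedness of u and v on the unit interval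
  obtain ⟨Cu, hCu⟩ : ∃ C, ∀ z ∈ Icc (0:ℝ) 1, ‖u z‖ ≤ C :=
    isCompact_Icc.exists_bound_of_continuousOn hucont.continuousOn
  have hCu0 : 0 ≤ Cu := le_trans (norm_nonneg _) (hCu 0 (by norm_num))
  have hmemμ : ∀ᵐ x ∂μ, x ∈ Ioc (0:ℝ) 1 := ae_restrict_mem measurableSet_Ioc
  have haμ0 : ∀ᵐ x ∂μ, 0 ≤ a x := ae_restrict_of_ae ha0
  have hubdd : ∀ᵐ x ∂μ, ‖u x‖ ≤ Cu := by
    filter_upwards [hmemμ] with x hx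
    exact hCu x (Ioc_subset_Icc_self hx)
  -- integrability toolbox
  have haC : Integrable (fun x => (a x : ℂ)) μ := haint.ofReal
  have int_au2 : Integrable (fun x => a x * ‖u x‖ ^ 2) μ := by
    have : Integrable (fun x => ‖u x‖ ^ 2 * a x) μ :=
      Integrable.bdd_mul haint ((hucont.norm.pow 2).aestronglyMeasurable)
        (by filter_upwards [hubdd] with x hx
            simpa [_root_.abs_of_nonneg (sq_nonneg (‖u x‖))] using pow_le_pow_left₀ (norm_nonneg _) hx 2)
    simpa [mul_comm] using this
  have int_af2 : Integrable (fun x => a x * ‖f x‖ ^ 2) μ := by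
    have : Integrable (fun x => ‖f x‖ ^ 2 * a x) μ :=
      Integrable.bdd_mul haint ((hfm.norm.pow_const 2).aestronglyMeasurable)
        (Filter.Eventually.of_forall fun x => by
          simpa [_root_.abs_of_nonneg (sq_nonneg (‖f x‖))] using pow_le_pow_left₀ (norm_nonneg _) (hM x) 2)
    simpa [mul_comm] using this
  have int_auu : Integrable (fun x => (a x : ℂ) * (u x * conj (u x))) μ := by
    have : Integrable (fun x => (u x * conj (u x)) * (a x : ℂ)) μ :=
      Integrable.bdd_mul haC ((hucont.mul (Complex.continuous_conj.comp hucont)).aestronglyMeasurable)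
        (by filter_upwards [hubdd] with x hx
            calc ‖u x * conj (u x)‖ = ‖u x‖ * ‖u x‖ := by
                  rw [norm_mul, RCLike.norm_conj]
              _ ≤ Cu * Cu := mul_le_mul hx hx (norm_nonneg _) hCu0)
    simpa [mul_comm] using this
  have int_afu : Integrable (fun x => (a x : ℂ) * (f x * conj (u x))) μ := by
    have : Integrable (fun x => (f x * conj (u x)) * (a x : ℂ)) μ :=
      Integrable.bdd_mul haC ((hfm.aestronglyMeasurable.mul
          (Complex.continuous_conj.comp hucont).aestronglyMeasurable))
        (by filter_upwards [hubdd] with x hx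
            calc ‖f x * conj (u x)‖ = ‖f x‖ * ‖u x‖ := by
                  rw [norm_mul, RCLike.norm_conj]
              _ ≤ M * Cu := mul_le_mul (hM x) hx (norm_nonneg _) hM0)
    simpa [mul_comm] using this
  have int_u''cu : Integrable (fun x => u'' x * conj (u x)) μ := by
    have : Integrable (fun x => conj (u x) * u'' x) μ :=
      Integrable.bdd_mul hu''int ((Complex.continuous_conj.comp hucont).aestronglyMeasurable)
        (by filter_upwards [hubdd] with x hx
            simpa [RCLike.norm_conj] using hx)
    simpa [mul_comm] using this
  have int_u''c : Integrable (fun x => u'' x * conj (u 1)) μ := hu''int.mul_const _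
  have int_cv : Integrable (fun t => conj (v t)) μ :=
    (Complex.continuous_conj.comp hvcont).integrableOn_Ioc
  have int_vcv : Integrable (fun t => v t * conj (v t)) μ :=
    (hvcont.mul (Complex.continuous_conj.comp hvcont)).integrableOn_Ioc
  have int_v2 : Integrable (fun x => ‖v x‖ ^ 2) μ := (hvcont.norm.pow 2).integrableOn_Ioc
  have int_u2 : Integrable (fun x => ‖u x‖ ^ 2) μ := (hucont.norm.pow 2).integrableOn_Ioc
  set A := ∫ x, a x * ‖u x‖ ^ 2 ∂μ with hAdef
  set B := ∫ x, ‖v x‖ ^ 2 ∂μ with hBdef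
  have hA0 : 0 ≤ A := integral_nonneg_of_ae (by filter_upwards [haμ0] with x hx; positivity)
  have hB0 : 0 ≤ B := integral_nonneg (fun x => sq_nonneg _)
  -- Step A : representation of conj (u x)
  have stepA : ∀ x ∈ Ioc (0:ℝ) 1,
      conj (u x) = conj (u 1) - ∫ t in Ioc x 1, conj (v t) := by
    intro x hx
    have hftc : ∫ t in x..(1:ℝ), v t = u 1 - u x :=
      intervalIntegral.integral_deriv_eq_sub (fun t _ => hudiff t)
        (hvcont.intervalIntegrable x 1)
    rw [intervalIntegral.integral_of_le hx.2] at hftc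
    have : (∫ t in Ioc x 1, conj (v t)) = conj (u 1 - u x) := by
      rw [integral_conj, hftc]
    rw [this, map_sub]; ring
  -- Fubini on the triangle
  have hS : MeasurableSet {p : ℝ × ℝ | p.1 ≤ p.2} :=
    measurableSet_le measurable_fst measurable_snd
  have hprod : Integrable (fun p : ℝ × ℝ => u'' p.1 * conj (v p.2)) (μ.prod μ) :=
    Integrable.mul_prod hu''int int_cv
  have hFint : Integrable
      (fun p : ℝ × ℝ => if p.1 ≤ p.2 then u'' p.1 * conj (v p.2) else 0) (μ.prod μ) := by
    refine (hprod.indicator hS).congr (Filter.Eventually.of_forall fun p => ?_)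
    simp [Set.indicator_apply, Set.mem_setOf_eq]
  have swap := integral_integral_swap
    (f := fun x t => if x ≤ t then u'' x * conj (v t) else 0) (μ := μ) (ν := μ) hFint
  have J1 : ∀ x ∈ Ioc (0:ℝ) 1,
      (∫ t, (if x ≤ t then u'' x * conj (v t) else 0) ∂μ)
        = u'' x * ∫ t in Ioc x 1, conj (v t) := by
    intro x hx
    have e1 : (fun t => if x ≤ t then u'' x * conj (v t) else 0)
        = (Ici x).indicator (fun t => u'' x * conj (v t)) := by
      funext t; simp [Set.indicator_apply, Set.mem_Ici]
    rw [hμ, e1, setIntegral_indicator measurableSet_Ici]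
    have e2 : Ioc (0:ℝ) 1 ∩ Ici x = Icc x 1 := by
      ext t
      simp only [mem_inter_iff, mem_Ioc, mem_Ici, mem_Icc]
      constructor
      · rintro ⟨⟨_, ht1⟩, hxt⟩; exact ⟨hxt, ht1⟩
      · rintro ⟨hxt, ht1⟩; exact ⟨⟨lt_of_lt_of_le hx.1 hxt, ht1⟩, hxt⟩
    rw [e2, integral_Icc_eq_integral_Ioc, integral_const_mul]
  have J2 : ∀ t ∈ Ioc (0:ℝ) 1,
      (∫ x, (if x ≤ t then u'' x * conj (v t) else 0) ∂μ)
        = (v t - v 0) * conj (v t) := by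
    intro t ht
    have e1 : (fun x => if x ≤ t then u'' x * conj (v t) else 0)
        = (Iic t).indicator (fun x => u'' x * conj (v t)) := by
      funext x; simp [Set.indicator_apply, Set.mem_Iic]
    rw [hμ, e1, setIntegral_indicator measurableSet_Iic]
    have e2 : Ioc (0:ℝ) 1 ∩ Iic t = Ioc 0 t := by
      ext x
      simp only [mem_inter_iff, mem_Ioc, mem_Iic]
      constructor
      · rintro ⟨⟨hx0, _⟩, hxt⟩; exact ⟨hx0, hxt⟩
      · rintro ⟨hx0, hxt⟩; exact ⟨⟨hx0, le_trans hxt ht.2⟩, hxt⟩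
    rw [e2, integral_mul_const]
    have hdt := hderiv_eq t
    rw [intervalIntegral.integral_of_le (le_of_lt ht.1)] at hdt
    have : (∫ x in Ioc (0:ℝ) t, u'' x) = v t - v 0 := by rw [hdt]; ring
    rw [this]
  have hJ : (∫ x, (u'' x * ∫ t in Ioc x 1, conj (v t)) ∂μ)
      = ∫ t, (v t - v 0) * conj (v t) ∂μ := by
    calc ∫ x, (u'' x * ∫ t in Ioc x 1, conj (v t)) ∂μ
        = ∫ x, (∫ t, (if x ≤ t then u'' x * conj (v t) else 0) ∂μ) ∂μ := by
          rw [hμ]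
          exact setIntegral_congr_fun measurableSet_Ioc (fun x hx => (J1 x hx).symm)
      _ = ∫ t, (∫ x, (if x ≤ t then u'' x * conj (v t) else 0) ∂μ) ∂μ := swap
      _ = ∫ t, (v t - v 0) * conj (v t) ∂μ := by
          rw [hμ]
          exact setIntegral_congr_fun measurableSet_Ioc (fun t ht => J2 t ht)
  have hJval : (∫ t, (v t - v 0) * conj (v t) ∂μ) = (B : ℂ) := by
    have expand : ∀ t, (v t - v 0) * conj (v t)
        = v t * conj (v t) - v 0 * conj (v t) := fun t => by ring
    simp_rw [expand]
    rw [integral_sub int_vcv (int_cv.const_mul _), integral_const_mul, integral_conj, hiv,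
      map_zero, mul_zero, sub_zero]
    have hvv : ∀ t, v t * conj (v t) = ((‖v t‖ ^ 2 : ℝ) : ℂ) := fun t => by
      rw [Complex.mul_conj, Complex.normSq_eq_norm_sq]
    simp_rw [hvv]
    rw [hBdef]
    exact integral_ofReal
  have hIBP : (∫ x, u'' x * conj (u x) ∂μ) = -(B : ℂ) := by
    have int_second : Integrable (fun x => u'' x * ∫ t in Ioc x 1, conj (v t)) μ := by
      refine (int_u''c.sub int_u''cu).congr ?_
      filter_upwards [hmemμ] with x hx
      simp only [Pi.sub_apply]
      linear_combination (-(u'' x)) * stepA x hx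
    calc ∫ x, u'' x * conj (u x) ∂μ
        = ∫ x, (u'' x * conj (u 1) - u'' x * ∫ t in Ioc x 1, conj (v t)) ∂μ := by
          rw [hμ]
          refine setIntegral_congr_fun measurableSet_Ioc (fun x hx => ?_)
          rw [stepA x hx]; ring
      _ = (∫ x, u'' x * conj (u 1) ∂μ) - ∫ x, (u'' x * ∫ t in Ioc x 1, conj (v t)) ∂μ :=
          integral_sub int_u''c int_second
      _ = -(B : ℂ) := by
          rw [integral_mul_const, hiu'', hJ, hJval]
          ring
  -- the energy identity
  have hode' : ∀ᵐ x ∂μ, u'' x * conj (u x)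
      = (ξ : ℂ) * I * ((a x : ℂ) * (u x * conj (u x))) - (a x : ℂ) * (f x * conj (u x)) := by
    filter_upwards [ae_restrict_of_ae hode] with x hx
    have hx' : u'' x = (ξ : ℂ) * I * (a x : ℂ) * u x - (a x : ℂ) * f x := by
      linear_combination -hx
    rw [hx']; ring
  set G := ∫ x, (a x : ℂ) * (f x * conj (u x)) ∂μ with hGdef
  have hAuu : (∫ x, (a x : ℂ) * (u x * conj (u x)) ∂μ) = (A : ℂ) := by
    have huu : ∀ x, (a x : ℂ) * (u x * conj (u x)) = ((a x * ‖u x‖ ^ 2 : ℝ) : ℂ) := fun x => by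
      rw [Complex.mul_conj, Complex.normSq_eq_norm_sq]; push_cast; ring
    simp_rw [huu]
    rw [hAdef]
    exact integral_ofReal
  have hEnergy : G = (ξ : ℂ) * I * (A : ℂ) + (B : ℂ) := by
    have hcongr := integral_congr_ae hode'
    rw [integral_sub (int_auu.const_mul _) int_afu, integral_const_mul, hAuu, hIBP, ← hGdef]
      at hcongr
    linear_combination hcongr
  have hGri : G = (B : ℂ) + ((ξ * A : ℝ) : ℂ) * I := by rw [hEnergy]; push_cast; ring
  have hreG : G.re = B := by rw [hGri]; simp
  have himG : G.im = ξ * A := by rw [hGri]; simp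
  -- Cauchy-Schwarz bound for G
  set F := seminormA a f with hFdef
  have hF0 : 0 ≤ F := Real.sqrt_nonneg _
  have hintaf0 : 0 ≤ ∫ x, a x * ‖f x‖ ^ 2 ∂μ :=
    integral_nonneg_of_ae (by filter_upwards [haμ0] with x hx; positivity)
  have hFeq : F = Real.sqrt (∫ x, a x * ‖f x‖ ^ 2 ∂μ) := by
    rw [hFdef]; unfold seminormA; rw [← hμ]
  have hFsq : F ^ 2 = ∫ x, a x * ‖f x‖ ^ 2 ∂μ := by
    rw [hFeq, Real.sq_sqrt hintaf0]
  have sqrtA_meas : AEStronglyMeasurable (fun x => Real.sqrt (a x)) μ :=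
    (Real.continuous_sqrt.measurable.comp ham).aestronglyMeasurable
  have hg2eq : (fun x => (Real.sqrt (a x) * ‖f x‖) ^ 2) =ᵐ[μ] fun x => a x * ‖f x‖ ^ 2 := by
    filter_upwards [haμ0] with x hx
    rw [mul_pow, Real.sq_sqrt hx]
  have hh2eq : (fun x => (Real.sqrt (a x) * ‖u x‖) ^ 2) =ᵐ[μ] fun x => a x * ‖u x‖ ^ 2 := by
    filter_upwards [haμ0] with x hx
    rw [mul_pow, Real.sq_sqrt hx]
  have hCS : ‖G‖ ≤ F * Real.sqrt A := by
    have step1 : ‖G‖ ≤ ∫ x, ‖(a x : ℂ) * (f x * conj (u x))‖ ∂μ :=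
      norm_integral_le_integral_norm _
    have step2 : (∫ x, ‖(a x : ℂ) * (f x * conj (u x))‖ ∂μ)
        = ∫ x, (Real.sqrt (a x) * ‖f x‖) * (Real.sqrt (a x) * ‖u x‖) ∂μ := by
      refine integral_congr_ae ?_
      filter_upwards [haμ0] with x hx
      have h1 : ‖(a x : ℂ) * (f x * conj (u x))‖ = a x * (‖f x‖ * ‖u x‖) := by
        rw [norm_mul, norm_mul, RCLike.norm_conj, Complex.norm_real,
          Real.norm_eq_abs, _root_.abs_of_nonneg hx]
      rw [h1, show (Real.sqrt (a x) * ‖f x‖) * (Real.sqrt (a x) * ‖u x‖)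
        = (Real.sqrt (a x) * Real.sqrt (a x)) * (‖f x‖ * ‖u x‖) from by ring,
        Real.mul_self_sqrt hx]
    have csapp := cs_integral (μ := μ)
      (g := fun x => Real.sqrt (a x) * ‖f x‖) (h := fun x => Real.sqrt (a x) * ‖u x‖)
      (Filter.Eventually.of_forall fun x => by positivity)
      (Filter.Eventually.of_forall fun x => by positivity)
      (sqrtA_meas.mul hfm.norm.aestronglyMeasurable)
      (sqrtA_meas.mul hucont.norm.aestronglyMeasurable)
      (int_af2.congr hg2eq.symm) (int_au2.congr hh2eq.symm)
    rw [integral_congr_ae hg2eq, integral_congr_ae hh2eq, ← hFeq, ← hAdef] at csapp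
    exact step1.trans (step2 ▸ csapp)
  have hBle : B ≤ F * Real.sqrt A := by
    have : G.re ≤ ‖G‖ := Complex.re_le_norm G
    rw [hreG] at this; exact this.trans hCS
  have hxiA : |ξ| * A ≤ F * Real.sqrt A := by
    have him : |G.im| ≤ ‖G‖ := Complex.abs_im_le_norm G
    rw [himG, abs_mul, _root_.abs_of_nonneg hA0] at him
    exact him.trans hCS
  have hξ0 : (0 : ℝ) < |ξ| := lt_of_lt_of_le one_pos hξ
  constructor
  · -- part 1
    by_cases hA : A = 0
    · have hB' : B ≤ 0 := by simpa [hA] using hBle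
      have : A + B ≤ 0 := by rw [hA]; linarith
      exact this.trans (by positivity)
    · have hsA : 0 < Real.sqrt A := Real.sqrt_pos.2 (lt_of_le_of_ne hA0 (Ne.symm hA))
      have hsAsq : Real.sqrt A * Real.sqrt A = A := Real.mul_self_sqrt hA0
      have h1 : |ξ| * Real.sqrt A ≤ F := by
        have h' : (|ξ| * Real.sqrt A) * Real.sqrt A ≤ F * Real.sqrt A := by
          rw [mul_assoc, hsAsq]; exact hxiA
        exact le_of_mul_le_mul_right h' hsA
      have h2 : Real.sqrt A ≤ F := le_trans (by nlinarith [Real.sqrt_nonneg A]) h1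
      have hmain : |ξ| * (A + B) ≤ 2 * F ^ 2 := by
        have e1 : |ξ| * A ≤ F * F := by nlinarith
        have e2 : |ξ| * B ≤ F * F := by
          have : |ξ| * B ≤ |ξ| * (F * Real.sqrt A) :=
            mul_le_mul_of_nonneg_left hBle (abs_nonneg ξ)
          nlinarith
        nlinarith
      calc A + B = |ξ|⁻¹ * (|ξ| * (A + B)) := by field_simp
        _ ≤ |ξ|⁻¹ * (2 * F ^ 2) :=
            mul_le_mul_of_nonneg_left hmain (inv_nonneg.2 (abs_nonneg ξ))
        _ = 2 * |ξ|⁻¹ * F ^ 2 := by ring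
  · -- part 2
    obtain ⟨y, hy, hymin⟩ := isCompact_Icc.exists_isMinOn (nonempty_Icc.2 zero_le_one)
      hucont.norm.continuousOn
    have hintc : Integrable (fun _ : ℝ => (1:ℝ)) μ := by
      rw [hμ]
      exact integrableOn_const (by rw [Real.volume_Ioc]; exact ENNReal.ofReal_ne_top)
    have huy2 : ‖u y‖ ^ 2 ≤ A := by
      have mono : (∫ x, a x * ‖u y‖ ^ 2 ∂μ) ≤ ∫ x, a x * ‖u x‖ ^ 2 ∂μ := by
        refine integral_mono_ae (haint.mul_const _) int_au2 ?_
        filter_upwards [haμ0, hmemμ] with x hx hmem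
        exact mul_le_mul_of_nonneg_left
          (pow_le_pow_left₀ (norm_nonneg _) (isMinOn_iff.mp hymin x (Ioc_subset_Icc_self hmem)) 2)
          hx
      rw [integral_mul_const, ha1, one_mul] at mono
      exact mono
    have hsqA : ‖u y‖ ≤ Real.sqrt A := by
      have h := Real.sqrt_le_sqrt huy2
      rwa [Real.sqrt_sq (norm_nonneg _)] at h
    have hvL1 : (∫ x, ‖v x‖ ∂μ) ≤ Real.sqrt B := by
      have cs1 := cs_integral (μ := μ) (g := fun x => ‖v x‖) (h := fun _ => (1:ℝ))
        (Filter.Eventually.of_forall fun x => norm_nonneg _)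
        (Filter.Eventually.of_forall fun _ => zero_le_one)
        hvcont.norm.aestronglyMeasurable aestronglyMeasurable_const
        int_v2 (by simpa using hintc)
      simp only [mul_one, one_pow] at cs1
      have h1 : (∫ _ : ℝ, (1:ℝ) ∂μ) = 1 := by
        rw [hμ, setIntegral_const, Real.volume_real_Ioc, smul_eq_mul, mul_one]
        norm_num
      rw [h1, Real.sqrt_one, mul_one, ← hBdef] at cs1
      exact cs1
    have hpt : ∀ x ∈ Ioc (0:ℝ) 1, ‖u x‖ ≤ Real.sqrt A + Real.sqrt B := by
      intro x hx
      have hxI : x ∈ Icc (0:ℝ) 1 := Ioc_subset_Icc_self hx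
      have hftc : ∫ t in y..x, v t = u x - u y :=
        intervalIntegral.integral_deriv_eq_sub (fun t _ => hudiff t)
          (hvcont.intervalIntegrable y x)
      have hbound : ‖∫ t in y..x, v t‖ ≤ ∫ t, ‖v t‖ ∂μ := by
        have h1 : ‖∫ t in y..x, v t‖ ≤ |∫ t in y..x, ‖v t‖| :=
          intervalIntegral.norm_integral_le_abs_integral_norm
        have h2 : |∫ t in y..x, ‖v t‖| = ∫ t in Ioc (min y x) (max y x), ‖v t‖ := by
          rcases le_total y x with h | h
          · rw [intervalIntegral.integral_of_le h, min_eq_left h, max_eq_right h,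
              _root_.abs_of_nonneg
                (setIntegral_nonneg measurableSet_Ioc fun t _ => norm_nonneg _)]
          · rw [intervalIntegral.integral_of_ge h, abs_neg, min_eq_right h, max_eq_left h,
              _root_.abs_of_nonneg
                (setIntegral_nonneg measurableSet_Ioc fun t _ => norm_nonneg _)]
        have h3 : (∫ t in Ioc (min y x) (max y x), ‖v t‖) ≤ ∫ t in Ioc (0:ℝ) 1, ‖v t‖ := by
          refine setIntegral_mono_set hvcont.norm.integrableOn_Ioc
            (Filter.Eventually.of_forall fun t => norm_nonneg _)
            (HasSubset.Subset.eventuallyLE ?_)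
          exact Ioc_subset_Ioc (le_min hy.1 hxI.1) (max_le hy.2 hxI.2)
        rw [hμ]
        exact h1.trans (h2 ▸ h3)
      have hdecomp : ‖u x‖ ≤ ‖u y‖ + ‖∫ t in y..x, v t‖ := by
        calc ‖u x‖ = ‖u y + (u x - u y)‖ := by ring_nf
          _ ≤ ‖u y‖ + ‖u x - u y‖ := norm_add_le _ _
          _ = ‖u y‖ + ‖∫ t in y..x, v t‖ := by rw [hftc]
      have := hbound.trans hvL1
      linarith [hsqA]
    have hconst : (∫ _ : ℝ, (Real.sqrt A + Real.sqrt B) ^ 2 ∂μ)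
        = (Real.sqrt A + Real.sqrt B) ^ 2 := by
      rw [hμ, setIntegral_const, Real.volume_real_Ioc, smul_eq_mul]
      norm_num
    have hmono2 : (∫ x, ‖u x‖ ^ 2 ∂μ) ≤ (Real.sqrt A + Real.sqrt B) ^ 2 := by
      rw [← hconst]
      refine integral_mono_ae int_u2 (by simpa using hintc.const_mul _) ?_
      filter_upwards [hmemμ] with x hx
      exact pow_le_pow_left₀ (norm_nonneg _) (hpt x hx) 2
    have hfin : (Real.sqrt A + Real.sqrt B) ^ 2 ≤ 2 * (A + B) := by
      nlinarith [Real.sq_sqrt hA0, Real.sq_sqrt hB0, sq_nonneg (Real.sqrt A - Real.sqrt B)]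
    linarith

/-- for `a ∈ 𝒜`, `|ξ| ≥ 1` and `f : 𝕋 → ℂ` bounded measurable,
any periodic `W^{2,1}` solution of `-u'' + iξ a u = a f` satisfies
`‖u‖_{H¹_a} ≤ √2 |ξ|^{-1/2} [f]_a`; consequently, there is a constant `C`,
independent of `a`, `ξ` and `f`, with `‖u‖_{H¹} ≤ C |ξ|^{-1/2} [f]_a`. -/
theorem statement_10 :
    (∀ (a : ℝ → ℝ), MemA a → ∀ (ξ : ℝ), 1 ≤ |ξ| →
      ∀ (f : ℝ → ℂ), (∀ x, f (x + 1) = f x) → Measurable f →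
        (∃ M, ∀ x, ‖f x‖ ≤ M) →
      ∀ (u u'' : ℝ → ℂ), IsPeriodicW21 u u'' →
      (∀ᵐ x : ℝ,
        -u'' x + (ξ : ℂ) * Complex.I * (a x : ℂ) * u x = (a x : ℂ) * f x) →
      Real.sqrt ((∫ x in Ioc (0:ℝ) 1, ‖deriv u x‖ ^ 2)
          + (∫ x in Ioc (0:ℝ) 1, a x * ‖u x‖ ^ 2))
        ≤ Real.sqrt 2 * |ξ| ^ (-(1/2 : ℝ)) * seminormA a f) ∧
    (∃ C : ℝ, 0 < C ∧
      ∀ (a : ℝ → ℝ), MemA a → ∀ (ξ : ℝ), 1 ≤ |ξ| →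
      ∀ (f : ℝ → ℂ), (∀ x, f (x + 1) = f x) → Measurable f →
        (∃ M, ∀ x, ‖f x‖ ≤ M) →
      ∀ (u u'' : ℝ → ℂ), IsPeriodicW21 u u'' →
      (∀ᵐ x : ℝ,
        -u'' x + (ξ : ℂ) * Complex.I * (a x : ℂ) * u x = (a x : ℂ) * f x) →
      Real.sqrt ((∫ x in Ioc (0:ℝ) 1, ‖deriv u x‖ ^ 2)
          + (∫ x in Ioc (0:ℝ) 1, ‖u x‖ ^ 2))
        ≤ C * |ξ| ^ (-(1/2 : ℝ)) * seminormA a f) := by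
  have sqrtb : ∀ (c ξ S F : ℝ), 0 ≤ c → 0 ≤ F → 1 ≤ |ξ| → S ≤ c * |ξ|⁻¹ * F ^ 2 →
      Real.sqrt S ≤ Real.sqrt c * |ξ| ^ (-(1/2 : ℝ)) * F := by
    intro c ξ S F hc hF hξ hS
    have hξ0 : (0:ℝ) < |ξ| := lt_of_lt_of_le one_pos hξ
    have h1 : Real.sqrt S ≤ Real.sqrt (c * |ξ|⁻¹ * F ^ 2) := Real.sqrt_le_sqrt hS
    have h2 : Real.sqrt (c * |ξ|⁻¹ * F ^ 2)
        = Real.sqrt c * Real.sqrt |ξ|⁻¹ * Real.sqrt (F ^ 2) := by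
      rw [Real.sqrt_mul (by positivity), Real.sqrt_mul hc]
    have h3 : Real.sqrt |ξ|⁻¹ = |ξ| ^ (-(1/2 : ℝ)) := by
      rw [Real.rpow_neg (abs_nonneg ξ), ← Real.sqrt_eq_rpow, Real.sqrt_inv]
    rw [h2, h3, Real.sqrt_sq hF] at h1
    exact h1
  constructor
  · intro a ha ξ hξ f hfper hfm hfb u u'' hu hode
    obtain ⟨h1, _⟩ := key a ha ξ hξ f hfm hfb u u'' hu hode
    have hsem0 : 0 ≤ seminormA a f := Real.sqrt_nonneg _
    exact sqrtb 2 ξ _ _ (by norm_num) hsem0 hξ (by linarith)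
  · refine ⟨Real.sqrt 6, Real.sqrt_pos.2 (by norm_num), ?_⟩
    intro a ha ξ hξ f hfper hfm hfb u u'' hu hode
    obtain ⟨h1, h2⟩ := key a ha ξ hξ f hfm hfb u u'' hu hode
    have hsem0 : 0 ≤ seminormA a f := Real.sqrt_nonneg _
    have hA0 : 0 ≤ ∫ x in Ioc (0:ℝ) 1, a x * ‖u x‖ ^ 2 :=
      integral_nonneg_of_ae (by
        filter_upwards [ae_restrict_of_ae ha.2.2.1] with x hx
        positivity)
    have hB0 : 0 ≤ ∫ x in Ioc (0:ℝ) 1, ‖deriv u x‖ ^ 2 :=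
      integral_nonneg fun x => sq_nonneg _
    apply sqrtb 6 ξ _ _ (by norm_num) hsem0 hξ
    linarith
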